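/- Let G = (V,E) be an arbitrary graph and let G' = (V, E ∪ F) be an arbitrary minimal triangulation of G. Then G is unipolar if and only if G' has a feasible clique split whose center H' is a maximal clique of G'. -/

import Mathlib

/-- A clique split of a graph `G`: the vertex set is partitioned into a center clique `H`
and peripheral cliques `P 0, …, P (k-1)` with no edges between distinct peripheral cliques. -/
structure IsCliqueSplit {V : Type*} (G : SimpleGraph V) (H : Set V) {k : ℕ}
    (P : Fin k → Set V) : Prop where
  center_clique : G.IsClique H
  periph_clique : ∀ i, G.IsClique (P i)
  center_disj : ∀ i, Disjoint H (P i)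
  periph_disj : ∀ i j, i ≠ j → Disjoint (P i) (P j)
  covers : H ∪ (⋃ i, P i) = Set.univ
  no_cross : ∀ i j, i ≠ j → ∀ u ∈ P i, ∀ v ∈ P j, ¬ G.Adj u v

/-- A graph is unipolar if it admits a clique split. -/
def Unipolar {V : Type*} (G : SimpleGraph V) : Prop :=
  ∃ (H : Set V) (k : ℕ) (P : Fin k → Set V), IsCliqueSplit G H P

/-- A graph is chordal if it contains no induced cycle on four or more vertices. -/
def Chordal {V : Type*} (G : SimpleGraph V) : Prop :=
  ∀ n : ℕ, 4 ≤ n → IsEmpty (SimpleGraph.cycleGraph n ↪g G)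

/-- `Gp` is a minimal triangulation of `G`: it is a chordal supergraph of `G` on the same
vertex set, and no chordal graph strictly between `G` and `Gp` exists (the set of fill
edges is inclusion-minimal). -/
def IsMinimalTriangulation {V : Type*} (G Gp : SimpleGraph V) : Prop :=
  G ≤ Gp ∧ Chordal Gp ∧ ∀ Gpp : SimpleGraph V, G ≤ Gpp → Gpp ≤ Gp → Chordal Gpp → Gpp = Gp

/-- `S` is a transferable set for the clique split of `Gp` with center `Hp` and peripheral
cliques `P`, with respect to the original graph `G`: `S ⊆ Hp`, for some `i` the set
`S ∪ P i` is a clique in `G`, and vertices of `S` have no `G`-neighbors in any `P j`, `j ≠ i`. -/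
def IsTransferable {V : Type*} (G : SimpleGraph V) (Hp : Set V) {k : ℕ}
    (P : Fin k → Set V) (S : Set V) : Prop :=
  S ⊆ Hp ∧ ∃ i : Fin k, G.IsClique (S ∪ P i) ∧
    ∀ j : Fin k, j ≠ i → ∀ u ∈ S, ∀ v ∈ P j, ¬ G.Adj u v

/-- A clique split of `Gp` with center `Hp` and peripheral cliques `P` is feasible
(with respect to the original graph `G`, the fill edges being the edges of `Gp` not in `G`):
(i) every fill edge either has one endpoint in `Hp` and the other in some `P j`, or both
endpoints in `Hp`; (ii) if some fill edge has both endpoints in `Hp`, then there is a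
transferable set `S ⊆ Hp` such that every such fill edge has one endpoint in `Hp − S` and
the other in `S`. -/
def IsFeasible {V : Type*} (G Gp : SimpleGraph V) (Hp : Set V) {k : ℕ}
    (P : Fin k → Set V) : Prop :=
  (∀ u v : V, Gp.Adj u v → ¬ G.Adj u v →
      (u ∈ Hp ∧ v ∈ Hp) ∨ (u ∈ Hp ∧ ∃ j : Fin k, v ∈ P j) ∨
        (v ∈ Hp ∧ ∃ j : Fin k, u ∈ P j)) ∧
  ((∃ u v : V, Gp.Adj u v ∧ ¬ G.Adj u v ∧ u ∈ Hp ∧ v ∈ Hp) →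
      ∃ S : Set V, IsTransferable G Hp P S ∧
        ∀ u v : V, Gp.Adj u v → ¬ G.Adj u v → u ∈ Hp → v ∈ Hp →
          ((u ∈ S ∧ v ∈ Hp \ S) ∨ (v ∈ S ∧ u ∈ Hp \ S)))

/-- `Hp` is a maximal clique of `Gp`. -/
def IsMaxClique {V : Type*} (Gp : SimpleGraph V) (Hp : Set V) : Prop :=
  Gp.IsClique Hp ∧ ∀ T : Set V, Gp.IsClique T → Hp ⊆ T → T = Hp
section Helpers

variable {V : Type*} {G Gp : SimpleGraph V} {H : Set V} {k : ℕ} {P : Fin k → Set V}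

/-- The subgraph of `Gp` keeping only edges with an endpoint in `H` or both endpoints
in a common peripheral clique. -/
private def cenP (Gp : SimpleGraph V) (H : Set V) (P : Fin k → Set V) :
    SimpleGraph V where
  Adj x y := Gp.Adj x y ∧ (x ∈ H ∨ y ∈ H ∨ ∃ l, x ∈ P l ∧ y ∈ P l)
  symm := ⟨by
    rintro x y ⟨hxy, h⟩
    refine ⟨hxy.symm, ?_⟩
    rcases h with h | h | ⟨l, h1, h2⟩
    · exact Or.inr (Or.inl h)
    · exact Or.inl h
    · exact Or.inr (Or.inr ⟨l, h2, h1⟩)⟩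
  loopless := ⟨fun x h => Gp.loopless.irrefl x h.1⟩

private lemma cenP_le : cenP Gp H P ≤ Gp := fun _ _ h => h.1

private lemma mem_periph (split : IsCliqueSplit G H P) {x : V} (hx : x ∉ H) :
    ∃ i, x ∈ P i := by
  have hx' : x ∈ H ∪ ⋃ i, P i := by rw [split.covers]; exact Set.mem_univ x
  rcases hx' with h | h
  · exact absurd h hx
  · simpa using h

private lemma le_cenP (split : IsCliqueSplit G H P) (hle : G ≤ Gp) : G ≤ cenP Gp H P := by
  intro x y hxy
  refine ⟨hle hxy, ?_⟩
  by_cases hx : x ∈ H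
  · exact Or.inl hx
  by_cases hy : y ∈ H
  · exact Or.inr (Or.inl hy)
  obtain ⟨i, hi⟩ := mem_periph split hx
  obtain ⟨j, hj⟩ := mem_periph split hy
  have hij : i = j := by
    by_contra hne
    exact split.no_cross i j hne x hi y hj hxy
  subst hij
  exact Or.inr (Or.inr ⟨i, hi, hj⟩)

open Fin.NatCast Fin.CommRing in
private lemma cenP_chordal (split : IsCliqueSplit G H P) (hle : G ≤ Gp)
    (hch : Chordal Gp) : Chordal (cenP Gp H P) := by
  intro n hn
  obtain ⟨m, rfl⟩ : ∃ m, n = m + 4 := ⟨n - 4, by omega⟩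
  constructor
  intro f
  have finj : Function.Injective f := f.injective
  by_cases hc : ∀ a b : Fin (m + 4), Gp.Adj (f a) (f b) → (SimpleGraph.cycleGraph (m + 4)).Adj a b
  · exact (hch (m + 4) (by omega)).false
      ⟨f.toEmbedding, fun {a b} => ⟨hc a b, fun h => cenP_le (f.map_rel_iff.mpr h)⟩⟩
  push_neg at hc
  obtain ⟨a, b, hab, hnadj⟩ := hc
  have hd : ¬(f a ∈ H ∨ f b ∈ H ∨ ∃ l, f a ∈ P l ∧ f b ∈ P l) := by
    intro h
    exact hnadj (f.map_rel_iff.mp ⟨hab, h⟩)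
  push_neg at hd
  obtain ⟨haH, hbH, hsep⟩ := hd
  obtain ⟨i, hai⟩ := mem_periph split haH
  obtain ⟨j, hbj⟩ := mem_periph split hbH
  have hij : i ≠ j := fun h => hsep i hai (h ▸ hbj)
  -- the arc lemma: walking along the cycle without meeting `H` stays in one peripheral clique
  have arc : ∀ (t : ℕ) (a0 : Fin (m + 4)) (l : Fin k), f a0 ∈ P l →
      (∀ s : ℕ, s ≤ t → f (a0 + (s : Fin (m + 4))) ∉ H) →
      f (a0 + (t : Fin (m + 4))) ∈ P l := by
    intro t
    induction t with
    | zero => intro a0 l h0 _; simpa using h0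
    | succ t ih =>
      intro a0 l h0 hH
      have ht : f (a0 + (t : Fin (m + 4))) ∈ P l := ih a0 l h0 (fun s hs => hH s (by omega))
      have hadj : (SimpleGraph.cycleGraph (m + 4)).Adj (a0 + (t : Fin (m + 4)))
          (a0 + ((t + 1 : ℕ) : Fin (m + 4))) := by
        rw [SimpleGraph.cycleGraph_adj]
        right
        push_cast
        ring
      obtain ⟨-, hcase⟩ := f.map_rel_iff.mpr hadj
      rcases hcase with h | h | ⟨l', h1, h2⟩
      · exact absurd h (hH t (by omega))
      · exact absurd h (hH (t + 1) le_rfl)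
      · have hll : l' = l := by
          by_contra hne
          exact absurd ht (Set.disjoint_left.mp (split.periph_disj l' l hne) h1)
        exact hll ▸ h2
  have hfab : f a ≠ f b := hab.ne
  have hba : a ≠ b := fun h => hfab (by rw [h])
  set tn : ℕ := ((b - a : Fin (m + 4))).val with htn
  set tn' : ℕ := ((a - b : Fin (m + 4))).val with htn'
  have htn_pos : 0 < tn := by
    rcases Nat.eq_zero_or_pos tn with h | h
    · exfalso
      apply hba
      have hz : b - a = 0 := by
        apply Fin.ext
        simpa [htn] using h
      have := sub_eq_zero.mp hz
      exact this.symm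
    · exact h
  have htn'_pos : 0 < tn' := by
    rcases Nat.eq_zero_or_pos tn' with h | h
    · exfalso
      apply hba
      have hz : a - b = 0 := by
        apply Fin.ext
        simpa [htn'] using h
      exact sub_eq_zero.mp hz
    · exact h
  have htn_lt : tn < m + 4 := (b - a).isLt
  have htn'_lt : tn' < m + 4 := (a - b).isLt
  have hb_eq : b = a + (tn : Fin (m + 4)) := by
    rw [htn, Fin.cast_val_eq_self]
    ring
  have ha_eq : a = b + (tn' : Fin (m + 4)) := by
    rw [htn', Fin.cast_val_eq_self]
    ring
  have hsum : tn + tn' = m + 4 := by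
    have hcast : ((tn + tn' : ℕ) : Fin (m + 4)) = 0 := by
      push_cast [htn, htn', Fin.cast_val_eq_self]
      ring
    have hdvd : (m + 4) ∣ (tn + tn') := by
      rwa [Fin.natCast_eq_zero] at hcast
    obtain ⟨c, hcv⟩ := hdvd
    have hup : tn + tn' < (m + 4) * 2 := by omega
    have hclt : c < 2 := Nat.lt_of_mul_lt_mul_left (hcv ▸ hup)
    have hc0 : c ≠ 0 := by
      rintro rfl
      simp at hcv
      omega
    have hc1 : c = 1 := by omega
    rw [hc1, Nat.mul_one] at hcv
    omega
  -- both arcs between `a` and `b` must contain a vertex of `H` in their interior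
  have harc1 : ∃ s : ℕ, 0 < s ∧ s < tn ∧ f (a + (s : Fin (m + 4))) ∈ H := by
    by_contra hno
    push_neg at hno
    have hmem : f (a + (tn : Fin (m + 4))) ∈ P i := by
      apply arc tn a i hai
      intro s hs
      rcases Nat.eq_zero_or_pos s with h0 | h0
      · subst h0; simpa using haH
      rcases Nat.lt_or_ge s tn with h1 | h1
      · exact hno s h0 h1
      · have hstn : s = tn := by omega
        subst hstn
        rw [← hb_eq]
        exact hbH
    rw [← hb_eq] at hmem
    exact absurd hmem (Set.disjoint_left.mp (split.periph_disj j i (Ne.symm hij)) hbj)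
  have harc2 : ∃ s : ℕ, 0 < s ∧ s < tn' ∧ f (b + (s : Fin (m + 4))) ∈ H := by
    by_contra hno
    push_neg at hno
    have hmem : f (b + (tn' : Fin (m + 4))) ∈ P j := by
      apply arc tn' b j hbj
      intro s hs
      rcases Nat.eq_zero_or_pos s with h0 | h0
      · subst h0; simpa using hbH
      rcases Nat.lt_or_ge s tn' with h1 | h1
      · exact hno s h0 h1
      · have hstn : s = tn' := by omega
        subst hstn
        rw [← ha_eq]
        exact haH
    rw [← ha_eq] at hmem
    exact absurd hmem (Set.disjoint_left.mp (split.periph_disj i j hij) hai)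
  obtain ⟨s1, hs1p, hs1lt, hh1⟩ := harc1
  obtain ⟨s2, hs2p, hs2lt, hh2⟩ := harc2
  set e : ℕ := tn + s2 with he
  have hh2' : f (a + (e : Fin (m + 4))) ∈ H := by
    have hpos : a + (e : Fin (m + 4)) = b + (s2 : Fin (m + 4)) := by
      rw [hb_eq, he]
      push_cast
      ring
    rw [hpos]
    exact hh2
  have hslt : s1 < e := by omega
  have helt : e < m + 4 := by omega
  have hne12 : a + (s1 : Fin (m + 4)) ≠ a + (e : Fin (m + 4)) := by
    intro hcontra
    have hc2 := add_left_cancel hcontra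
    have hs1e : s1 = e := by
      have h1 := Fin.val_cast_of_lt (n := m + 4) (a := s1) (by omega)
      have h2 := Fin.val_cast_of_lt (n := m + 4) (a := e) helt
      rw [← h1, ← h2, hc2]
    omega
  have hGadj : G.Adj (f (a + (s1 : Fin (m + 4)))) (f (a + (e : Fin (m + 4)))) :=
    split.center_clique hh1 hh2' (fun h => hne12 (finj h))
  have hcyc := f.map_rel_iff.mp (le_cenP split hle hGadj)
  rw [SimpleGraph.cycleGraph_adj] at hcyc
  have h1v : (1 : Fin (m + 4)).val = 1 := rfl
  have hd1 : ((a + (s1 : Fin (m + 4))) - (a + (e : Fin (m + 4)))) =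
      (((m + 4) - (e - s1) : ℕ) : Fin (m + 4)) := by
    have hz : ((m + 4 : ℕ) : Fin (m + 4)) = 0 := by
      rw [Fin.natCast_eq_zero]
    push_cast [Nat.cast_sub (show e - s1 ≤ m + 4 by omega), Nat.cast_sub hslt.le, hz]
    ring
  have hd2 : ((a + (e : Fin (m + 4))) - (a + (s1 : Fin (m + 4)))) =
      ((e - s1 : ℕ) : Fin (m + 4)) := by
    push_cast [Nat.cast_sub hslt.le]
    ring
  rcases hcyc with h | h
  · rw [hd1] at h
    have hval := congrArg Fin.val h
    rw [Fin.val_cast_of_lt (show (m + 4) - (e - s1) < m + 4 by omega), h1v] at hval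
    omega
  · rw [hd2] at h
    have hval := congrArg Fin.val h
    rw [Fin.val_cast_of_lt (show e - s1 < m + 4 by omega), h1v] at hval
    omega

private lemma exists_max_clique (Gp : SimpleGraph V) (H : Set V) (hH : Gp.IsClique H) :
    ∃ Hp, H ⊆ Hp ∧ Gp.IsClique Hp ∧ ∀ T, Gp.IsClique T → Hp ⊆ T → T = Hp := by
  have hchainclq : ∀ c ⊆ {T : Set V | Gp.IsClique T}, IsChain (· ⊆ ·) c → c.Nonempty →
      ∃ ub ∈ {T : Set V | Gp.IsClique T}, ∀ s ∈ c, s ⊆ ub := by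
    intro c hc hchain _
    refine ⟨⋃₀ c, ?_, fun s hs => Set.subset_sUnion_of_mem hs⟩
    rintro x hx y hy hxy
    obtain ⟨s, hs, hxs⟩ := hx
    obtain ⟨t, ht, hyt⟩ := hy
    rcases hchain.total hs ht with h | h
    · exact hc ht (h hxs) hyt hxy
    · exact hc hs hxs (h hyt) hxy
  obtain ⟨Hp, hsub, hmax⟩ := zorn_subset_nonempty {T : Set V | Gp.IsClique T} hchainclq H hH
  exact ⟨Hp, hsub, hmax.prop, fun T hT hsubT => subset_antisymm (hmax.2 hT hsubT) hsubT⟩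

end Helpers

/-- Let `Gp` be an arbitrary minimal triangulation of `G`. Then `G` is unipolar if and
only if `Gp` has a feasible clique split whose center `Hp` is a maximal clique of `Gp`. -/
theorem unipolar_iff_feasible_clique_split {V : Type*} (G Gp : SimpleGraph V)
    (hmt : IsMinimalTriangulation G Gp) :
    Unipolar G ↔ ∃ (Hp : Set V) (k : ℕ) (P : Fin k → Set V),
      IsCliqueSplit Gp Hp P ∧ IsFeasible G Gp Hp P ∧ IsMaxClique Gp Hp := by
  obtain ⟨hle, hch, hmin⟩ := hmt
  constructor
  · rintro ⟨H, k, P, split⟩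
    -- Step 1: the minimal triangulation has no cross-peripheral fill edges.
    have hGppeq : cenP Gp H P = Gp :=
      hmin _ (le_cenP split hle) cenP_le (cenP_chordal split hle hch)
    have hstruct : ∀ x y, Gp.Adj x y → (x ∈ H ∨ y ∈ H ∨ ∃ l, x ∈ P l ∧ y ∈ P l) := by
      intro x y hxy
      rw [← hGppeq] at hxy
      exact hxy.2
    have huniq : ∀ {x : V} {l1 l2 : Fin k}, x ∈ P l1 → x ∈ P l2 → l1 = l2 := by
      intro x l1 l2 h1 h2
      by_contra hne
      exact absurd h2 (Set.disjoint_left.mp (split.periph_disj l1 l2 hne) h1)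
    have hHP : ∀ {x : V} {l : Fin k}, x ∈ P l → x ∉ H := by
      intro x l hx hH
      exact absurd hx (Set.disjoint_left.mp (split.center_disj l) hH)
    -- every fill edge runs between H and a peripheral clique
    have hfill : ∀ x y, Gp.Adj x y → ¬ G.Adj x y → (x ∈ H ∧ y ∉ H) ∨ (y ∈ H ∧ x ∉ H) := by
      intro x y hxy hnxy
      rcases hstruct x y hxy with h | h | ⟨l, h1, h2⟩
      · by_cases hy : y ∈ H
        · exact absurd (split.center_clique h hy hxy.ne) hnxy
        · exact Or.inl ⟨h, hy⟩
      · by_cases hx : x ∈ H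
        · exact absurd (split.center_clique hx h hxy.ne) hnxy
        · exact Or.inr ⟨h, hx⟩
      · exact absurd (split.periph_clique l h1 h2 hxy.ne) hnxy
    have hnocrossGp : ∀ i j, i ≠ j → ∀ u ∈ P i, ∀ v ∈ P j, ¬ Gp.Adj u v := by
      intro i j hij u hu v hv hadj
      rcases hstruct u v hadj with h | h | ⟨l, h1, h2⟩
      · exact hHP hu h
      · exact hHP hv h
      · exact hij ((huniq hu h1).trans (huniq h2 hv))
    obtain ⟨Hp, hHHp, hHpclq, hHpmax⟩ := exists_max_clique Gp H (split.center_clique.mono hle)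
    refine ⟨Hp, k, fun l => P l \ Hp, ?_, ⟨?_, ?_⟩, hHpclq, hHpmax⟩
    · -- clique split of Gp
      refine ⟨hHpclq, fun l => ((split.periph_clique l).mono hle).subset Set.diff_subset,
        fun l => disjoint_sdiff_self_right, fun i j hij =>
          (split.periph_disj i j hij).mono Set.diff_subset Set.diff_subset, ?_, ?_⟩
      · apply Set.eq_univ_of_forall
        intro v
        by_cases hv : v ∈ Hp
        · exact Or.inl hv
        · have hvH : v ∉ H := fun h => hv (hHHp h)
          obtain ⟨l, hl⟩ := mem_periph split hvH
          exact Or.inr (Set.mem_iUnion.mpr ⟨l, hl, hv⟩)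
      · intro i j hij u hu v hv
        exact hnocrossGp i j hij u hu.1 v hv.1
    · -- feasibility (i)
      intro u v hadj hnadj
      rcases hfill u v hadj hnadj with ⟨huH, hvH⟩ | ⟨hvH, huH⟩
      · by_cases hv : v ∈ Hp
        · exact Or.inl ⟨hHHp huH, hv⟩
        · obtain ⟨l, hl⟩ := mem_periph split hvH
          exact Or.inr (Or.inl ⟨hHHp huH, l, hl, hv⟩)
      · by_cases hu : u ∈ Hp
        · exact Or.inl ⟨hu, hHHp hvH⟩
        · obtain ⟨l, hl⟩ := mem_periph split huH
          exact Or.inr (Or.inr ⟨hHHp hvH, l, hl, hu⟩)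
    · -- feasibility (ii)
      rintro ⟨u0, v0, hadj0, hnadj0, hu0, hv0⟩
      -- one of the endpoints lies in Hp \ H; get its peripheral index m
      have hex : ∃ w, w ∈ Hp ∧ w ∉ H := by
        rcases hfill u0 v0 hadj0 hnadj0 with ⟨_, hvH⟩ | ⟨_, huH⟩
        · exact ⟨v0, hv0, hvH⟩
        · exact ⟨u0, hu0, huH⟩
      obtain ⟨w, hwHp, hwH⟩ := hex
      obtain ⟨mm, hwm⟩ := mem_periph split hwH
      have hT : Hp \ H ⊆ P mm := by
        rintro t ⟨htHp, htH⟩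
        obtain ⟨m', hm'⟩ := mem_periph split htH
        by_cases htw : t = w
        · subst htw
          rwa [huniq hm' hwm] at hm'
        · have hadj : Gp.Adj t w := hHpclq htHp hwHp htw
          have hmm : m' = mm := by
            by_contra hne
            exact hnocrossGp m' mm hne t hm' w hwm hadj
          rwa [hmm] at hm'
      refine ⟨Hp \ H, ⟨Set.diff_subset, mm, ?_, ?_⟩, ?_⟩
      · refine ((split.periph_clique mm).subset ?_)
        rintro x (hx | hx)
        · exact hT hx
        · exact hx.1
      · intro j hj u hu v hv
        exact split.no_cross mm j (fun h => hj h.symm) u (hT hu) v hv.1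
      · intro u v hadj hnadj huHp hvHp
        rcases hfill u v hadj hnadj with ⟨huH, hvH⟩ | ⟨hvH, huH⟩
        · exact Or.inr ⟨⟨hvHp, hvH⟩, huHp, fun h => h.2 huH⟩
        · exact Or.inl ⟨⟨huHp, huH⟩, hvHp, fun h => h.2 hvH⟩
  · rintro ⟨Hp, k, P, split, ⟨hfeas1, hfeas2⟩, hmax⟩
    have hperiphG : ∀ j, G.IsClique (P j) := by
      intro j x hx y hy hne
      have hadj : Gp.Adj x y := split.periph_clique j hx hy hne
      by_contra hn
      have hdisj := split.center_disj j
      rcases hfeas1 x y hadj hn with ⟨h1, _⟩ | ⟨h1, _⟩ | ⟨h1, _⟩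
      · exact Set.disjoint_left.mp hdisj h1 hx
      · exact Set.disjoint_left.mp hdisj h1 hx
      · exact Set.disjoint_left.mp hdisj h1 hy
    by_cases hfillH : ∃ u v, Gp.Adj u v ∧ ¬ G.Adj u v ∧ u ∈ Hp ∧ v ∈ Hp
    · obtain ⟨S, ⟨hSsub, i, hSclq, hStrans⟩, hSprop⟩ := hfeas2 hfillH
      refine ⟨Hp \ S, k, fun j => if j = i then S ∪ P i else P j, ?_, ?_, ?_, ?_, ?_, ?_⟩
      · -- center clique in G
        rintro x ⟨hxHp, hxS⟩ y ⟨hyHp, hyS⟩ hne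
        have hadj : Gp.Adj x y := split.center_clique hxHp hyHp hne
        by_contra hn
        rcases hSprop x y hadj hn hxHp hyHp with ⟨h1, _⟩ | ⟨h1, _⟩
        · exact hxS h1
        · exact hyS h1
      · intro j
        by_cases hj : j = i
        · subst hj; simpa using hSclq
        · simpa [hj] using hperiphG j
      · intro j
        by_cases hj : j = i
        · subst hj
          simp only [if_pos rfl]
          refine Set.disjoint_union_right.mpr ⟨disjoint_sdiff_self_left, ?_⟩
          exact (split.center_disj j).mono_left Set.diff_subset
        · simp only [if_neg hj]
          exact (split.center_disj j).mono_left Set.diff_subset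
      · intro j1 j2 hne
        by_cases h1 : j1 = i <;> by_cases h2 : j2 = i
        · exact absurd (h1.trans h2.symm) hne
        · subst h1
          simp only [if_pos rfl, if_neg h2]
          refine Set.disjoint_union_left.mpr ⟨?_, split.periph_disj j1 j2 (fun h => h2 h.symm)⟩
          exact (split.center_disj j2).mono_left hSsub
        · subst h2
          simp only [if_pos rfl, if_neg h1]
          refine Set.disjoint_union_right.mpr ⟨?_, split.periph_disj j1 j2 h1⟩
          exact ((split.center_disj j1).mono_left hSsub).symm
        · simp only [if_neg h1, if_neg h2]
          exact split.periph_disj j1 j2 hne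
      · apply Set.eq_univ_of_forall
        intro v
        have hv : v ∈ Hp ∪ ⋃ j, P j := by rw [split.covers]; exact Set.mem_univ v
        rcases hv with hv | hv
        · by_cases hvS : v ∈ S
          · exact Or.inr (Set.mem_iUnion.mpr ⟨i, by simp [hvS]⟩)
          · exact Or.inl ⟨hv, hvS⟩
        · obtain ⟨j, hj⟩ := Set.mem_iUnion.mp hv
          by_cases hji : j = i
          · subst hji
            exact Or.inr (Set.mem_iUnion.mpr ⟨j, by simp [hj]⟩)
          · exact Or.inr (Set.mem_iUnion.mpr ⟨j, by simp [hji, hj]⟩)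
      · intro j1 j2 hne u hu v hv
        have hGpnc : ∀ a b, a ∈ P j1 → b ∈ P j2 → ¬ G.Adj a b := by
          intro a b ha hb hadj
          exact split.no_cross j1 j2 hne a ha b hb (hle hadj)
        by_cases h1 : j1 = i <;> by_cases h2 : j2 = i
        · exact absurd (h1.trans h2.symm) hne
        · subst h1
          rw [if_pos rfl] at hu
          rw [if_neg h2] at hv
          rcases hu with hu | hu
          · exact hStrans j2 h2 u hu v hv
          · exact hGpnc u v hu hv
        · subst h2
          rw [if_pos rfl] at hv
          rw [if_neg h1] at hu
          rcases hv with hv | hv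
          · exact fun h => hStrans j1 h1 v hv u hu h.symm
          · exact hGpnc u v hu hv
        · rw [if_neg h1] at hu
          rw [if_neg h2] at hv
          exact hGpnc u v hu hv
    · -- no fill edges inside Hp: the split works for G directly
      push_neg at hfillH
      refine ⟨Hp, k, P, ?_, hperiphG, split.center_disj, split.periph_disj, split.covers, ?_⟩
      · intro x hx y hy hne
        have hadj : Gp.Adj x y := split.center_clique hx hy hne
        by_contra hn
        exact hfillH x y hadj hn hx hy
      · intro i j hij u hu v hv hadj
        exact split.no_cross i j hij u hu v hv (hle hadj)
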